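/- Let (γ_n)_{n≥0} be a sequence of real numbers, let T : ℝ[x] → ℝ[x] be the linear operator determined by T[L_n] = γ_n L_n for every n, and let (Q_k)_{k≥0} be the differential coefficients of T. Then for each n ∈ ℕ₀: Q_n(x) = Σ_{k=0}^{n} ((−x)^k/k!) Σ_{j=0}^{n−k} C(n−k, j) (−1)^j γ_j L_j(x). -/

import Mathlib

open Polynomial Finset

noncomputable section

/-- The physicists' Hermite polynomials. -/
def hermitePoly (n : ℕ) : Polynomial ℝ :=
  ∑ k ∈ Finset.range (n / 2 + 1),
    Polynomial.C ((-1 : ℝ) ^ k * n.factorial * 2 ^ (n - 2 * k) /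
      (k.factorial * (n - 2 * k).factorial)) * Polynomial.X ^ (n - 2 * k)

/-- The Laguerre polynomials. -/
def laguerrePoly (n : ℕ) : Polynomial ℝ :=
  ∑ k ∈ Finset.range (n + 1),
    Polynomial.C ((-1 : ℝ) ^ k / k.factorial * n.choose k) * Polynomial.X ^ k

/-- A real polynomial is hyperbolic if all of its complex roots are real
(the zero polynomial counts as hyperbolic). -/
def Hyperbolic (p : Polynomial ℝ) : Prop :=
  p = 0 ∨ ∀ z : ℂ, Polynomial.aeval z p = 0 → z.im = 0

/-- A linear operator on ℝ[x] preserves hyperbolicity. -/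
def HypPreserving (T : Polynomial ℝ →ₗ[ℝ] Polynomial ℝ) : Prop :=
  ∀ p : Polynomial ℝ, Hyperbolic p → Hyperbolic (T p)

/-- Classical multiplier sequence. -/
def ClassicalMS (γ : ℕ → ℝ) : Prop :=
  ∃ T : Polynomial ℝ →ₗ[ℝ] Polynomial ℝ,
    (∀ n, T (Polynomial.X ^ n) = γ n • Polynomial.X ^ n) ∧ HypPreserving T

/-- Hermite multiplier sequence. -/
def HermiteMS (γ : ℕ → ℝ) : Prop :=
  ∃ T : Polynomial ℝ →ₗ[ℝ] Polynomial ℝ,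
    (∀ n, T (hermitePoly n) = γ n • hermitePoly n) ∧ HypPreserving T

/-- Laguerre multiplier sequence. -/
def LaguerreMS (γ : ℕ → ℝ) : Prop :=
  ∃ T : Polynomial ℝ →ₗ[ℝ] Polynomial ℝ,
    (∀ n, T (laguerrePoly n) = γ n • laguerrePoly n) ∧ HypPreserving T

/-- A sequence is trivial if all entries vanish except possibly two at consecutive indices. -/
def TrivialSeq (γ : ℕ → ℝ) : Prop :=
  ∃ m : ℕ, ∀ n, n ≠ m → n ≠ m + 1 → γ n = 0

def EL (i : ℕ) : Polynomial ℝ := C ((-1:ℝ)^i / i.factorial) * X ^ i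

lemma EL_zero : EL 0 = 1 := by simp [EL]

lemma EL_eq (k : ℕ) : C ((1:ℝ)/k.factorial) * (-X : Polynomial ℝ)^k = EL k := by
  rw [EL, neg_pow]
  rw [show ((-1:Polynomial ℝ)^k) = C ((-1:ℝ)^k) by simp [map_pow]]
  rw [← mul_assoc, ← C_mul, mul_comm ((1:ℝ)/k.factorial)]
  ring_nf

lemma lag_eq (n : ℕ) : laguerrePoly n = ∑ i ∈ range (n+1), C ((n.choose i : ℝ)) * EL i := by
  unfold laguerrePoly EL
  refine Finset.sum_congr rfl fun i _ => ?_
  rw [← mul_assoc, ← C_mul]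
  ring_nf

lemma EL_mul (i j : ℕ) : EL i * EL j = C (((i+j).choose i : ℝ)) * EL (i+j) := by
  unfold EL
  rw [mul_mul_mul_comm, ← pow_add, ← C_mul, ← mul_assoc, ← C_mul]
  congr 1
  rw [Nat.cast_choose ℝ (Nat.le_add_right i j)]
  have h1 : (i.factorial : ℝ) ≠ 0 := Nat.cast_ne_zero.mpr i.factorial_ne_zero
  have h2 : (j.factorial : ℝ) ≠ 0 := Nat.cast_ne_zero.mpr j.factorial_ne_zero
  have h3 : ((i+j).factorial : ℝ) ≠ 0 := Nat.cast_ne_zero.mpr (i+j).factorial_ne_zero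
  rw [pow_add, Nat.add_sub_cancel_left]
  field_simp

lemma EL_deriv (i : ℕ) : derivative (EL (i+1)) = -EL i := by
  unfold EL
  rw [derivative_C_mul_X_pow]
  rw [Nat.add_sub_cancel]
  rw [show (-(C ((-1:ℝ)^i / i.factorial) * X ^ i)) = C (-((-1:ℝ)^i / i.factorial)) * X ^ i by
    simp]
  congr 1
  rw [Nat.factorial_succ]
  have h1 : (i.factorial : ℝ) ≠ 0 := Nat.cast_ne_zero.mpr i.factorial_ne_zero
  push_cast
  field_simp
  ring

lemma EL_iter (k i : ℕ) : derivative^[k] (EL (k+i)) = C ((-1:ℝ)^k) * EL i := by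
  induction k generalizing i with
  | zero => simp
  | succ k ih =>
    rw [Function.iterate_succ_apply]
    rw [show k + 1 + i = (k + i) + 1 by omega]
    rw [EL_deriv, show (k+i) = k + i from rfl]
    rw [iterate_derivative_neg, ih i]
    rw [pow_succ]
    rw [show C ((-1:ℝ)^k * -1) = C ((-1:ℝ)^k) * C (-1:ℝ) by rw [C_mul]]
    simp

lemma EL_iter_zero {i k : ℕ} (h : i < k) : derivative^[k] (EL i) = 0 := by
  have h1 : derivative^[i+1] (EL i) = 0 := by
    rw [Function.iterate_succ_apply']
    have := EL_iter i 0
    rw [Nat.add_zero] at this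
    rw [this, EL_zero, mul_one, derivative_C]
  rw [show k = (k - (i+1)) + (i+1) by omega, Function.iterate_add_apply, h1]
  simp [iterate_derivative_zero]

lemma dLag {k n : ℕ} (h : k ≤ n) :
    derivative^[k] (laguerrePoly n)
      = ∑ j ∈ range (n-k+1), C ((-1:ℝ)^k * (n.choose (j+k) : ℝ)) * EL j := by
  rw [lag_eq, iterate_derivative_sum]
  simp only [iterate_derivative_C_mul]
  rw [show n + 1 = k + (n - k + 1) by omega, Finset.sum_range_add]
  have hz : ∑ i ∈ range k, C ((n.choose i : ℝ)) * derivative^[k] (EL i) = 0 := by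
    refine Finset.sum_eq_zero fun i hi => ?_
    rw [EL_iter_zero (mem_range.mp hi), mul_zero]
  rw [hz, zero_add]
  refine Finset.sum_congr rfl fun j _ => ?_
  rw [EL_iter k j, ← mul_assoc, ← C_mul, Nat.add_comm k j]
  ring_nf

lemma natDeg_lag (n : ℕ) : (laguerrePoly n).natDegree = n := by
  have hcoeff : (laguerrePoly n).coeff n = (-1:ℝ)^n / n.factorial := by
    rw [laguerrePoly, Polynomial.finset_sum_coeff]
    simp only [Polynomial.coeff_C_mul, Polynomial.coeff_X_pow]
    rw [Finset.sum_eq_single_of_mem n (self_mem_range_succ n)]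
    · simp
    · intro k _ hk
      simp [Ne.symm hk]
  have hne : (laguerrePoly n).coeff n ≠ 0 := by
    rw [hcoeff]
    positivity
  refine le_antisymm ?_ (le_natDegree_of_ne_zero hne)
  refine Polynomial.natDegree_sum_le_of_forall_le _ _ fun k hk => ?_
  refine le_trans (natDegree_mul_le) ?_
  simp only [natDegree_C, natDegree_X_pow, zero_add]
  exact Nat.lt_succ_iff.mp (mem_range.mp hk)

lemma sum_tri {M : Type*} [AddCommMonoid M] (n : ℕ) (f : ℕ → ℕ → M) :
    ∑ k ∈ range (n+1), ∑ i ∈ range (k+1), f k i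
      = ∑ i ∈ range (n+1), ∑ m ∈ range (n+1-i), f (i+m) i := by
  have h1 : ∑ k ∈ range (n+1), ∑ i ∈ range (k+1), f k i
      = ∑ k ∈ range (n+1), ∑ i ∈ range (n+1), if i ≤ k then f k i else 0 := by
    refine Finset.sum_congr rfl fun k hk => ?_
    rw [← Finset.sum_filter]
    refine (Finset.sum_congr ?_ fun _ _ => rfl)
    ext i
    simp only [mem_filter, mem_range]
    have := mem_range.mp hk
    omega
  rw [h1, Finset.sum_comm]
  refine Finset.sum_congr rfl fun i hi => ?_
  rw [← Finset.sum_filter]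
  have hf : Finset.filter (fun k => i ≤ k) (range (n+1)) = Finset.Ico i (n+1) := by
    ext k; simp only [mem_filter, mem_range, mem_Ico]; omega
  rw [hf, Finset.sum_Ico_eq_sum_range]

lemma tri_comm {M : Type*} [AddCommMonoid M] (N : ℕ) (g : ℕ → ℕ → M) :
    ∑ i ∈ range N, ∑ j ∈ range (N-i), g i j = ∑ j ∈ range N, ∑ i ∈ range (N-j), g i j := by
  have key : ∀ h : ℕ → ℕ → M, ∀ i ∈ range N, ∑ j ∈ range (N-i), h i j
      = ∑ j ∈ range N, if i + j < N then h i j else 0 := by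
    intro h i hi
    rw [← Finset.sum_filter]
    refine (Finset.sum_congr ?_ fun _ _ => rfl)
    ext j
    simp only [mem_filter, mem_range]
    have := mem_range.mp hi
    omega
  rw [Finset.sum_congr rfl (key g), Finset.sum_comm,
    Finset.sum_congr rfl (key fun j i => g i j)]
  refine Finset.sum_congr rfl fun j _ => Finset.sum_congr rfl fun i _ => ?_
  rw [Nat.add_comm]

lemma tri_diag {M : Type*} [AddCommMonoid M] (N : ℕ) (f : ℕ → ℕ → M) :
    ∑ i ∈ range (N+1), ∑ j ∈ range (N+1-i), f i j
      = ∑ s ∈ range (N+1), ∑ i ∈ range (s+1), f i (s-i) := by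
  rw [sum_tri N (fun k i => f i (k-i))]
  refine Finset.sum_congr rfl fun i _ => Finset.sum_congr rfl fun m _ => ?_
  rw [Nat.add_sub_cancel_left]

lemma alt_sum (s : ℕ) :
    ∑ i ∈ range (s+1), (-1:ℝ)^i * (s.choose i : ℝ) = if s = 0 then 1 else 0 := by
  have h := Int.alternating_sum_range_choose (n := s)
  have h2 := congrArg (fun z : ℤ => (z : ℝ)) h
  push_cast at h2
  rw [h2]

lemma diag_cancel (N : ℕ) (F : ℕ → Polynomial ℝ) :
    ∑ i ∈ range (N+1), ∑ j ∈ range (N+1-i),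
      C ((-1:ℝ)^i * (((i+j).choose i : ℕ) : ℝ)) * F (i+j) = F 0 := by
  rw [tri_diag]
  have h : ∀ s ∈ range (N+1),
      ∑ i ∈ range (s+1), C ((-1:ℝ)^i * (((i+(s-i)).choose i : ℕ) : ℝ)) * F (i+(s-i))
        = if s = 0 then F 0 else 0 := by
    intro s _
    have hs : ∀ i ∈ range (s+1), i + (s - i) = s := fun i hi => by
      have := mem_range.mp hi; omega
    rw [Finset.sum_congr rfl fun i hi => by rw [hs i hi]]
    rw [← Finset.sum_mul, ← map_sum, alt_sum]
    split
    · next h0 => subst h0; simp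
    · simp
  rw [Finset.sum_congr rfl h, Finset.sum_ite_eq' (range (N+1)) 0 (fun _ => F 0)]
  simp

def AopL (γ : ℕ → ℝ) (m : ℕ) : Polynomial ℝ :=
  ∑ j ∈ range (m+1), C ((m.choose j : ℝ) * (-1:ℝ)^j * γ j) * laguerrePoly j

lemma key (γ : ℕ → ℝ) (n : ℕ) :
    ∑ k ∈ range (n+1), (∑ i ∈ range (k+1), EL i * AopL γ (k-i)) * derivative^[k] (laguerrePoly n)
      = γ n • laguerrePoly n := by
  have step1 : ∑ k ∈ range (n+1),
      (∑ i ∈ range (k+1), EL i * AopL γ (k-i)) * derivative^[k] (laguerrePoly n)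
      = ∑ k ∈ range (n+1), ∑ i ∈ range (k+1), ∑ j ∈ range (n-k+1),
          (EL i * AopL γ (k-i)) * (C ((-1:ℝ)^k * (n.choose (j+k) : ℝ)) * EL j) := by
    refine Finset.sum_congr rfl fun k hk => ?_
    rw [dLag (Nat.lt_succ_iff.mp (mem_range.mp hk)), Finset.sum_mul]
    exact Finset.sum_congr rfl fun i _ => Finset.mul_sum _ _ _
  rw [step1]
  rw [sum_tri n (fun k i => ∑ j ∈ range (n-k+1),
      (EL i * AopL γ (k-i)) * (C ((-1:ℝ)^k * (n.choose (j+k) : ℝ)) * EL j))]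
  rw [tri_comm (n+1) (fun i m => ∑ j ∈ range (n-(i+m)+1),
      (EL i * AopL γ ((i+m)-i)) * (C ((-1:ℝ)^(i+m) * (n.choose (j+(i+m)) : ℝ)) * EL j))]
  have step2 : ∀ m ∈ range (n+1),
      (∑ i ∈ range (n+1-m), ∑ j ∈ range (n-(i+m)+1),
        (EL i * AopL γ ((i+m)-i)) * (C ((-1:ℝ)^(i+m) * (n.choose (j+(i+m)) : ℝ)) * EL j))
      = C ((-1:ℝ)^m * (n.choose m : ℝ)) * AopL γ m := by
    intro m hm
    have hmn : m ≤ n := Nat.lt_succ_iff.mp (mem_range.mp hm)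
    have hN : n + 1 - m = (n - m) + 1 := by omega
    rw [hN]
    have step2a : ∀ i ∈ range ((n-m)+1),
        (∑ j ∈ range (n-(i+m)+1),
          (EL i * AopL γ ((i+m)-i)) * (C ((-1:ℝ)^(i+m) * (n.choose (j+(i+m)) : ℝ)) * EL j))
        = ∑ j ∈ range ((n-m)+1-i), C ((-1:ℝ)^i * (((i+j).choose i : ℕ) : ℝ)) *
            (AopL γ m * (C ((-1:ℝ)^m * (n.choose ((i+j)+m) : ℝ)) * EL (i+j))) := by
      intro i hi
      have hin : i ≤ n - m := Nat.lt_succ_iff.mp (mem_range.mp hi)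
      have hr : n - (i+m) + 1 = (n-m)+1-i := by omega
      rw [hr, Nat.add_sub_cancel_left]
      refine Finset.sum_congr rfl fun j _ => ?_
      have hidx : j + (i+m) = (i+j) + m := by omega
      rw [hidx]
      calc (EL i * AopL γ m) * (C ((-1:ℝ)^(i+m) * (n.choose ((i+j)+m) : ℝ)) * EL j)
          = (EL i * EL j) * (C ((-1:ℝ)^(i+m) * (n.choose ((i+j)+m) : ℝ)) * AopL γ m) := by
            ring
        _ = (C (((i+j).choose i : ℝ)) * EL (i+j)) *
              (C ((-1:ℝ)^(i+m) * (n.choose ((i+j)+m) : ℝ)) * AopL γ m) := by rw [EL_mul]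
        _ = _ := by
            simp only [C_mul, map_pow, pow_add, map_neg, map_one]
            ring
    rw [Finset.sum_congr rfl step2a]
    rw [diag_cancel (n-m) (fun s => AopL γ m * (C ((-1:ℝ)^m * (n.choose (s+m) : ℝ)) * EL s))]
    simp only [Nat.zero_add, EL_zero, mul_one]
    ring
  rw [Finset.sum_congr rfl step2]
  -- now: ∑ m ∈ range (n+1), C ((-1)^m * choose n m) * AopL γ m = γ n • laguerrePoly n
  have step3 : ∀ m ∈ range (n+1), C ((-1:ℝ)^m * (n.choose m : ℝ)) * AopL γ m
      = ∑ j ∈ range (m+1), C ((-1:ℝ)^m * (n.choose m : ℝ)) *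
          (C ((m.choose j : ℝ) * (-1:ℝ)^j * γ j) * laguerrePoly j) := by
    intro m _
    rw [AopL, Finset.mul_sum]
  rw [Finset.sum_congr rfl step3]
  rw [sum_tri n (fun m j => C ((-1:ℝ)^m * (n.choose m : ℝ)) *
      (C ((m.choose j : ℝ) * (-1:ℝ)^j * γ j) * laguerrePoly j))]
  have step4 : ∀ j ∈ range (n+1),
      (∑ t ∈ range (n+1-j), C ((-1:ℝ)^(j+t) * (n.choose (j+t) : ℝ)) *
        (C (((j+t).choose j : ℝ) * (-1:ℝ)^j * γ j) * laguerrePoly j))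
      = if j = n then γ n • laguerrePoly n else 0 := by
    intro j hj
    have hjn : j ≤ n := Nat.lt_succ_iff.mp (mem_range.mp hj)
    rw [show n + 1 - j = (n-j)+1 by omega]
    have hterm : ∀ t ∈ range ((n-j)+1),
        C ((-1:ℝ)^(j+t) * (n.choose (j+t) : ℝ)) *
          (C (((j+t).choose j : ℝ) * (-1:ℝ)^j * γ j) * laguerrePoly j)
        = C ((γ j * (n.choose j : ℝ)) * ((-1:ℝ)^t * ((n-j).choose t : ℝ))) * laguerrePoly j := by
      intro t ht
      have htn : t ≤ n - j := Nat.lt_succ_iff.mp (mem_range.mp ht)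
      have hcm := Nat.choose_mul (n := n) (Nat.le_add_right j t)
      rw [Nat.add_sub_cancel_left] at hcm
      have hc : (n.choose (j+t) : ℝ) * ((j+t).choose j : ℝ)
          = (n.choose j : ℝ) * ((n-j).choose t : ℝ) := by exact_mod_cast congrArg Nat.cast hcm
      rw [← mul_assoc, ← C_mul]
      congr 1
      rw [C_inj]
      have hsq : ((-1:ℝ)^j) * ((-1:ℝ)^j) = 1 := by
        rw [← pow_add, ← two_mul, pow_mul]; norm_num
      rw [pow_add]
      linear_combination (γ j * (-1:ℝ)^t * ((n.choose (j+t):ℝ) * (((j+t).choose j):ℝ))) * hsq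
        + (γ j * (-1:ℝ)^t) * hc
    rw [Finset.sum_congr rfl hterm, ← Finset.sum_mul, ← map_sum, ← Finset.mul_sum, alt_sum]
    by_cases hje : j = n
    · subst hje
      simp [Nat.sub_self, smul_eq_C_mul]
    · have h0 : n - j ≠ 0 := by omega
      simp [h0, hje]
  rw [Finset.sum_congr rfl step4, Finset.sum_ite_eq' (range (n+1)) n
    (fun _ => γ n • laguerrePoly n)]
  simp


/-- the second explicit formula for the differential coefficients of a
Laguerre diagonal differential operator. -/
theorem stmt_19 (γ : ℕ → ℝ)
    (T : Polynomial ℝ →ₗ[ℝ] Polynomial ℝ)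
    (hT : ∀ n, T (laguerrePoly n) = γ n • laguerrePoly n)
    (Q : ℕ → Polynomial ℝ)
    (hQ : ∀ p : Polynomial ℝ,
      T p = ∑ k ∈ Finset.range (p.natDegree + 1), Q k * (Polynomial.derivative^[k] p)) :
    ∀ n : ℕ, Q n = ∑ k ∈ Finset.range (n + 1),
      Polynomial.C ((1 : ℝ) / k.factorial) * (-Polynomial.X) ^ k *
        ∑ j ∈ Finset.range (n - k + 1),
          Polynomial.C (((n - k).choose j : ℝ) * (-1) ^ j * γ j) * laguerrePoly j := by
  have hR : ∀ N : ℕ, (∑ k ∈ range (N + 1),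
      C ((1 : ℝ) / k.factorial) * (-X : Polynomial ℝ) ^ k *
        ∑ j ∈ range (N - k + 1), C (((N - k).choose j : ℝ) * (-1) ^ j * γ j) * laguerrePoly j)
      = ∑ k ∈ range (N+1), EL k * AopL γ (N-k) := by
    intro N
    refine Finset.sum_congr rfl fun k _ => ?_
    rw [EL_eq]
    rfl
  intro n
  induction n using Nat.strong_induction_on with
  | _ n ih =>
    rw [hR n]
    have h1 : γ n • laguerrePoly n
        = ∑ k ∈ range (n+1), Q k * derivative^[k] (laguerrePoly n) := by
      rw [← hT n, hQ (laguerrePoly n), natDeg_lag]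
    have h2 := key γ n
    have h3 : ∑ k ∈ range (n+1), Q k * derivative^[k] (laguerrePoly n)
        = ∑ k ∈ range (n+1),
            (∑ i ∈ range (k+1), EL i * AopL γ (k-i)) * derivative^[k] (laguerrePoly n) := by
      rw [h1] at h2
      exact h2.symm
    rw [Finset.sum_range_succ, Finset.sum_range_succ] at h3
    have hpre : ∑ k ∈ range n, Q k * derivative^[k] (laguerrePoly n)
        = ∑ k ∈ range n,
            (∑ i ∈ range (k+1), EL i * AopL γ (k-i)) * derivative^[k] (laguerrePoly n) := by
      refine Finset.sum_congr rfl fun k hk => ?_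
      rw [ih k (mem_range.mp hk), hR k]
    rw [hpre] at h3
    have h4 := add_left_cancel h3
    have hD : derivative^[n] (laguerrePoly n) = C ((-1:ℝ)^n) := by
      rw [dLag (le_refl n), Nat.sub_self]
      simp [Finset.sum_range_one, EL_zero, Nat.choose_self]
    rw [hD] at h4
    have hC : (C ((-1:ℝ)^n) : Polynomial ℝ) ≠ 0 := by
      simp
    exact mul_right_cancel₀ hC h4
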